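/- Derivative of the total enthalpy along the 3-Lax curve at the base pressure: let γ > 1 and let (ρ_R, q_R, E_R) be a gas state with ρ_R > 0, velocity u_R = q_R/ρ_R, pressure p_R = (γ−1)(E_R − q_R²/(2ρ_R)) > 0 and sound speed c_R = √(γp_R/ρ_R). With ψ and φ the Lax-curve parametrisation functions based at (ρ_R, p_R), the total-enthalpy function H(σ) := (γ/(γ−1))·σ/φ(σ) + (u_R + ψ(σ))²/2 has derivative H′(p_R) = (u_R + c_R)/(c_R·ρ_R) at σ = p_R. -/

import Mathlib

/-- The velocity function `ψ` of the Lax-curve parametrisation. -/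
noncomputable def laxPsi (γ ρ p : ℝ) (σ : ℝ) : ℝ :=
  if σ ≤ p then
    (2 * Real.sqrt (γ * p / ρ) / (γ - 1)) * ((σ / p) ^ ((γ - 1) / (2 * γ)) - 1)
  else
    (σ - p) * Real.sqrt ((1 - (γ - 1) / (γ + 1)) / (ρ * (σ + ((γ - 1) / (γ + 1)) * p)))

/-- The density function `φ` of the Lax-curve parametrisation. -/
noncomputable def laxPhi (γ ρ p : ℝ) (σ : ℝ) : ℝ :=
  if σ ≤ p then
    ρ * (σ / p) ^ (1 / γ)
  else
    ρ * (σ + ((γ - 1) / (γ + 1)) * p) / (((γ - 1) / (γ + 1)) * σ + p)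

set_option maxHeartbeats 2000000 in
/-- Derivative of the total enthalpy `H(σ) = (γ/(γ−1))·σ/φ(σ) + (u_R + ψ(σ))²/2` along
the 3-Lax curve at the base pressure: `H′(p_R) = (u_R + c_R)/(c_R·ρ_R)`. -/
theorem lax3_enthalpy_deriv_at_base
    (γ : ℝ) (hγ : 1 < γ)
    (ρR qR ER uR pR cR : ℝ) (hρ : 0 < ρR)
    (huR : uR = qR / ρR)
    (hpR : pR = (γ - 1) * (ER - qR ^ 2 / (2 * ρR))) (hp : 0 < pR)
    (hcR : cR = Real.sqrt (γ * pR / ρR)) :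
    HasDerivAt
      (fun σ : ℝ => (γ / (γ - 1)) * σ / laxPhi γ ρR pR σ + (uR + laxPsi γ ρR pR σ) ^ 2 / 2)
      ((uR + cR) / (cR * ρR)) pR := by
  have hγ0 : (0:ℝ) < γ := by linarith
  have hγ1 : (0:ℝ) < γ - 1 := by linarith
  have hγp1 : (0:ℝ) < γ + 1 := by linarith
  have hc0 : 0 < cR := by
    rw [hcR]; exact Real.sqrt_pos.mpr (by positivity)
  have hc2 : cR ^ 2 = γ * pR / ρR := by
    rw [hcR]; exact Real.sq_sqrt (by positivity)
  have hc2' : cR ^ 2 * ρR = γ * pR := by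
    rw [hc2]; field_simp
  set m : ℝ := (γ - 1) / (γ + 1) with hm
  have hm0 : 0 < m := by positivity
  have hm1 : m < 1 := by
    rw [hm, div_lt_one hγp1]; linarith
  have hcsqrt : Real.sqrt (γ * pR / ρR) = cR := hcR.symm
  have hpp : pR / pR = 1 := div_self hp.ne'
  -- the one–sided (left) model function
  have hw1 : HasDerivAt (fun σ : ℝ => ρR * (σ / pR) ^ (1 / γ))
      (ρR * (1 / pR * (1 / γ) * (pR / pR) ^ (1 / γ - 1))) pR := by
    exact (((hasDerivAt_id pR).div_const pR).rpow_const
      (Or.inl (by simp only [id_eq]; rw [hpp]; norm_num))).const_mul ρR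
  have hψ1 : HasDerivAt (fun σ : ℝ => uR +
      (2 * cR / (γ - 1)) * ((σ / pR) ^ ((γ - 1) / (2 * γ)) - 1))
      ((2 * cR / (γ - 1)) * (1 / pR * ((γ - 1) / (2 * γ)) *
        (pR / pR) ^ ((γ - 1) / (2 * γ) - 1))) pR := by
    exact ((((((hasDerivAt_id pR).div_const pR).rpow_const
      (Or.inl (by simp only [id_eq]; rw [hpp]; norm_num))).sub_const 1).const_mul
        (2 * cR / (γ - 1))).const_add uR)
  have hL : HasDerivAt (fun σ : ℝ => (γ / (γ - 1)) * σ / (ρR * (σ / pR) ^ (1 / γ)) +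
      (uR + (2 * cR / (γ - 1)) * ((σ / pR) ^ ((γ - 1) / (2 * γ)) - 1)) ^ 2 / 2)
      ((uR + cR) / (cR * ρR)) pR := by
    have h1 : HasDerivAt (fun σ : ℝ => (γ / (γ - 1)) * σ / (ρR * (σ / pR) ^ (1 / γ)))
        (((γ / (γ - 1)) * (ρR * (pR / pR) ^ (1 / γ)) -
          (γ / (γ - 1)) * pR * (ρR * (1 / pR * (1 / γ) * (pR / pR) ^ (1 / γ - 1)))) /
          (ρR * (pR / pR) ^ (1 / γ)) ^ 2) pR := by
      have := ((hasDerivAt_id pR).const_mul (γ / (γ - 1))).div hw1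
        (by rw [hpp, Real.one_rpow]; simpa using hρ.ne')
      simpa [Pi.div_def] using this
    have h2 := ((hψ1.pow 2).div_const 2)
    have := h1.add h2
    rw [hpp] at this
    simp only [Real.one_rpow, sub_self, mul_zero, add_zero] at this
    convert this using 1
    · rfl
    · rfl
    · rfl
    have h4 : (uR + cR) / (cR * ρR) = 1 / ρR + uR * cR / (cR ^ 2 * ρR) := by
      field_simp; ring
    rw [h4, hc2']
    field_simp
    ring
  -- the one–sided (right) model function
  have hden0 : ρR * (pR + m * pR) ≠ 0 := by positivity
  have hden1 : m * pR + pR ≠ 0 := by positivity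
  have hsval : Real.sqrt ((1 - m) / (ρR * (pR + m * pR))) = 1 / (ρR * cR) := by
    have harg : (1 - m) / (ρR * (pR + m * pR)) = (1 / (ρR * cR)) ^ 2 := by
      rw [div_pow, one_pow, mul_pow, hc2, hm]
      field_simp
      ring
    rw [harg, Real.sqrt_sq (by positivity)]
  have hgpos : (0:ℝ) < (1 - m) / (ρR * (pR + m * pR)) := by
    apply div_pos (by linarith) (by positivity)
  have hlin : HasDerivAt (fun σ : ℝ => ρR * (σ + m * pR)) ρR pR := by
    have := ((hasDerivAt_id pR).add_const (m * pR)).const_mul ρR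
    simpa using this
  have hg : HasDerivAt (fun σ : ℝ => (1 - m) / (ρR * (σ + m * pR)))
      ((0 * (ρR * (pR + m * pR)) - (1 - m) * ρR) / (ρR * (pR + m * pR)) ^ 2) pR := by
    exact (hasDerivAt_const pR (1 - m)).div hlin hden0
  have hsq := hg.sqrt hgpos.ne'
  have hψ2 : HasDerivAt (fun σ : ℝ => uR + (σ - pR) *
      Real.sqrt ((1 - m) / (ρR * (σ + m * pR))))
      (1 * Real.sqrt ((1 - m) / (ρR * (pR + m * pR))) + (pR - pR) *
        (((0 * (ρR * (pR + m * pR)) - (1 - m) * ρR) / (ρR * (pR + m * pR)) ^ 2) /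
          (2 * Real.sqrt ((1 - m) / (ρR * (pR + m * pR)))))) pR := by
    exact (((hasDerivAt_id pR).sub_const pR).mul hsq).const_add uR
  have hphi2 : HasDerivAt (fun σ : ℝ => ρR * (σ + m * pR) / (m * σ + pR))
      ((ρR * (m * pR + pR) - ρR * (pR + m * pR) * m) / (m * pR + pR) ^ 2) pR := by
    have hd := ((hasDerivAt_id pR).const_mul m).add_const pR
    have := hlin.div hd (by simpa using hden1)
    simpa [Pi.div_def] using this
  have hR : HasDerivAt (fun σ : ℝ => (γ / (γ - 1)) * σ / (ρR * (σ + m * pR) / (m * σ + pR)) +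
      (uR + (σ - pR) * Real.sqrt ((1 - m) / (ρR * (σ + m * pR)))) ^ 2 / 2)
      ((uR + cR) / (cR * ρR)) pR := by
    have hphi2v : ρR * (pR + m * pR) / (m * pR + pR) ≠ 0 := by
      apply div_ne_zero (by positivity) hden1
    have h1 := ((hasDerivAt_id pR).const_mul (γ / (γ - 1))).div hphi2 hphi2v
    have h2 := ((hψ2.pow 2).div_const 2)
    have := h1.add h2
    simp only [id_eq, sub_self, zero_mul, mul_zero, add_zero, zero_div, one_mul,
      mul_one, zero_sub, zero_add] at this ⊢
    rw [hsval] at this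
    convert this using 1
    · rfl
    · rfl
    · rfl
    have h4 : (uR + cR) / (cR * ρR) = 1 / ρR + uR * (1 / (ρR * cR)) := by
      field_simp; ring
    rw [h4]
    have h1γ : (1:ℝ) + γ ≠ 0 := by linarith
    field_simp [hm, h1γ, hγ1.ne', hp.ne', hρ.ne', hc0.ne']
    rw [hm]
    field_simp
    ring
  -- glue the two pieces
  have hLw : HasDerivWithinAt
      (fun σ : ℝ => (γ / (γ - 1)) * σ / laxPhi γ ρR pR σ + (uR + laxPsi γ ρR pR σ) ^ 2 / 2)
      ((uR + cR) / (cR * ρR)) (Set.Iic pR) pR := by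
    apply hL.hasDerivWithinAt.congr
    · intro x hx
      simp only [laxPhi, laxPsi, if_pos (Set.mem_Iic.mp hx), hcsqrt]
    · simp only [laxPhi, laxPsi, if_pos le_rfl, hcsqrt]
  have hRw : HasDerivWithinAt
      (fun σ : ℝ => (γ / (γ - 1)) * σ / laxPhi γ ρR pR σ + (uR + laxPsi γ ρR pR σ) ^ 2 / 2)
      ((uR + cR) / (cR * ρR)) (Set.Ici pR) pR := by
    apply hR.hasDerivWithinAt.congr
    · intro x hx
      rcases eq_or_lt_of_le (Set.mem_Ici.mp hx) with h | h
      · subst h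
        simp only [laxPhi, laxPsi, if_pos le_rfl, hcsqrt, hpp, Real.one_rpow,
          sub_self, mul_zero, zero_mul, mul_one, add_zero]
        rw [show pR + m * pR = m * pR + pR by ring, mul_div_cancel_right₀ _ hden1]
      · simp only [laxPhi, laxPsi, if_neg (not_le.mpr h), hm]
    · simp only [laxPhi, laxPsi, if_pos le_rfl, hcsqrt, hpp, Real.one_rpow,
        sub_self, mul_zero, zero_mul, mul_one, add_zero]
      rw [show pR + m * pR = m * pR + pR by ring, mul_div_cancel_right₀ _ hden1]
  have := hLw.union hRw
  rw [Set.Iic_union_Ici] at this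
  exact hasDerivWithinAt_univ.mp this
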